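/- Let (X, ρ) be a compact metric space and let T : X → X be a continuous, open, distance-expanding map. Then there exists α > 0 with the following property: if there exist a point x ∈ X and an integer L ≥ 1 such that ρ(x, T^L(x)) ≤ α, then X contains a periodic point of T (i.e., there exist z ∈ X and n ≥ 1 with T^n(z) = z). -/

import Mathlib

open Metric Filter Function Set Topology NNReal

/-- A map `T` on a metric space is *distance-expanding* if there exist `λ > 1`, `η > 0`
and `N ≥ 0` such that points at distance at most `η` have their `N`-th iterates at
distance at least `λ` times the original distance. -/
def DistanceExpanding {X : Type*} [MetricSpace X] (T : X → X) : Prop :=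
  ∃ (l : ℝ) (η : ℝ) (N : ℕ), 1 < l ∧ 0 < η ∧
    ∀ x y : X, dist x y ≤ η → l * dist x y ≤ dist (T^[N] x) (T^[N] y)

/-- Pigeonhole: in a compact metric space, every orbit has two iterates `β`-close. -/
lemma pigeon_orbit {X : Type*} [MetricSpace X] [CompactSpace X] (f : X → X) (x : X)
    {β : ℝ} (hβ : 0 < β) : ∃ i j : ℕ, i < j ∧ dist (f^[i] x) (f^[j] x) ≤ β := by
  obtain ⟨a, -, φ, hφ, hconv⟩ :=
    isCompact_univ.tendsto_subseq (x := fun k => f^[k] x) (fun n => Set.mem_univ _)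
  rw [Metric.tendsto_atTop] at hconv
  obtain ⟨M, hM⟩ := hconv (β / 2) (by linarith)
  refine ⟨φ M, φ (M + 1), hφ (by omega), ?_⟩
  calc dist (f^[φ M] x) (f^[φ (M + 1)] x)
      ≤ dist (f^[φ M] x) a + dist (f^[φ (M + 1)] x) a := dist_triangle_right _ _ _
    _ ≤ β / 2 + β / 2 := add_le_add (hM M le_rfl).le (hM (M + 1) (by omega)).le
    _ = β := by ring

/-- Uniform local surjectivity for an open continuous map on a compact metric space. -/
lemma unif_surj {X : Type*} [MetricSpace X] [CompactSpace X] {S : X → X}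
    (hc : Continuous S) (ho : IsOpenMap S) {η : ℝ} (hη : 0 < η) :
    ∃ ξ : ℝ, 0 < ξ ∧ ∀ p : X, closedBall (S p) ξ ⊆ S '' closedBall p (η / 2) := by
  by_contra h
  push_neg at h
  have H : ∀ k : ℕ, ∃ p y : X, dist y (S p) ≤ 1 / (k + 1) ∧ y ∉ S '' closedBall p (η / 2) := by
    intro k
    obtain ⟨p, hp⟩ := h (1 / (k + 1)) (by positivity)
    obtain ⟨y, hy1, hy2⟩ := Set.not_subset.mp hp
    exact ⟨p, y, mem_closedBall.mp hy1, hy2⟩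
  choose p y hy hny using H
  obtain ⟨a, -, φ, hφ, hconv⟩ := isCompact_univ.tendsto_subseq (x := p) (fun n => Set.mem_univ _)
  have hyconv : Tendsto (fun k => y (φ k)) atTop (𝓝 (S a)) := by
    rw [tendsto_iff_dist_tendsto_zero]
    have hb : ∀ k, dist (y (φ k)) (S a) ≤ 1 / (φ k + 1) + dist (S (p (φ k))) (S a) := by
      intro k
      calc dist (y (φ k)) (S a) ≤ dist (y (φ k)) (S (p (φ k))) + dist (S (p (φ k))) (S a) :=
            dist_triangle _ _ _
        _ ≤ 1 / (φ k + 1) + dist (S (p (φ k))) (S a) := by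
            have := hy (φ k); push_cast at this ⊢; linarith
    have h1 : Tendsto (fun k : ℕ => 1 / ((φ k : ℝ) + 1)) atTop (𝓝 0) := by
      apply tendsto_one_div_add_atTop_nhds_zero_nat.comp
      exact hφ.tendsto_atTop
    have h2 : Tendsto (fun k => dist (S (p (φ k))) (S a)) atTop (𝓝 0) := by
      rw [← tendsto_iff_dist_tendsto_zero]
      exact (hc.tendsto a).comp hconv
    have h3 : Tendsto (fun k => 1 / ((φ k : ℝ) + 1) + dist (S (p (φ k))) (S a)) atTop (𝓝 0) := by
      simpa using h1.add h2
    exact squeeze_zero (fun k => dist_nonneg) hb h3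
  have himg : ∀ᶠ k in atTop, y (φ k) ∈ S '' ball a (η / 4) := by
    apply hyconv.eventually_mem
    exact (ho _ isOpen_ball).mem_nhds ⟨a, mem_ball_self (by linarith), rfl⟩
  have hclose : ∀ᶠ k in atTop, dist (p (φ k)) a < η / 4 := by
    rw [Metric.tendsto_atTop] at hconv
    obtain ⟨M, hM⟩ := hconv (η / 4) (by linarith)
    exact eventually_atTop.mpr ⟨M, fun k hk => hM k hk⟩
  obtain ⟨k, hk1, hk2⟩ := (himg.and hclose).exists
  obtain ⟨w, hw, hwy⟩ := hk1
  refine hny (φ k) ⟨w, ?_, hwy⟩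
  rw [mem_closedBall]
  calc dist w (p (φ k)) ≤ dist w a + dist a (p (φ k)) := dist_triangle _ _ _
    _ ≤ η / 4 + η / 4 := by
        rw [mem_ball] at hw
        rw [dist_comm a]
        exact add_le_add hw.le hk2.le
    _ = η / 2 := by ring

/-- Iterated expansion along close orbits. -/
lemma exp_iter {X : Type*} [MetricSpace X] {S : X → X} {l η : ℝ} (hl : 1 < l)
    (hexp : ∀ x y : X, dist x y ≤ η → l * dist x y ≤ dist (S x) (S y)) :
    ∀ (m : ℕ) (w w' : X), (∀ k, k < m → dist (S^[k] w) (S^[k] w') ≤ η) →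
      l ^ m * dist w w' ≤ dist (S^[m] w) (S^[m] w') := by
  have hlpos : (0:ℝ) < l := by linarith
  intro m
  induction m with
  | zero => intro w w' _; simp
  | succ m ih =>
      intro w w' hcl
      have h0 : dist w w' ≤ η := by simpa using hcl 0 (by omega)
      have h1 : l * dist w w' ≤ dist (S w) (S w') := hexp w w' h0
      have h2 : l ^ m * dist (S w) (S w') ≤ dist (S^[m] (S w)) (S^[m] (S w')) := by
        apply ih
        intro k hk
        have := hcl (k + 1) (by omega)
        simpa [Function.iterate_succ_apply] using this
      have hlm : (0:ℝ) ≤ l ^ m := by positivity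
      calc l ^ (m + 1) * dist w w' = l ^ m * (l * dist w w') := by ring
        _ ≤ l ^ m * dist (S w) (S w') := mul_le_mul_of_nonneg_left h1 hlm
        _ ≤ dist (S^[m] (S w)) (S^[m] (S w')) := h2
        _ = dist (S^[m+1] w) (S^[m+1] w') := by
            rw [Function.iterate_succ_apply, Function.iterate_succ_apply]

/-- Closing lemma: an orbit segment nearly returning to its start can be closed up
to a genuine periodic orbit. -/
lemma closing {X : Type*} [MetricSpace X] [CompactSpace X] {S : X → X}
    (hc : Continuous S) (ho : IsOpenMap S) {l η : ℝ} (hl : 1 < l) (hη : 0 < η)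
    (hexp : ∀ x y : X, dist x y ≤ η → l * dist x y ≤ dist (S x) (S y)) :
    ∃ β : ℝ, 0 < β ∧ ∀ (x : X) (m : ℕ), 1 ≤ m → dist x (S^[m] x) ≤ β →
      ∃ z : X, S^[m] z = z := by
  have hlpos : (0:ℝ) < l := by linarith
  obtain ⟨ξ0, hξ0pos, hξ0⟩ := unif_surj hc ho hη
  set ξ : ℝ := min ξ0 (η / 2) with hξdef
  have hξpos : 0 < ξ := lt_min hξ0pos (by linarith)
  have hξη : ξ ≤ η / 2 := min_le_right _ _
  -- one-step inverse branch
  have branch : ∀ p y : X, dist y (S p) ≤ ξ → ∃ w, S w = y ∧ dist w p ≤ dist y (S p) / l := by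
    intro p y hy
    obtain ⟨w, hw, hSw⟩ := hξ0 p (mem_closedBall.mpr (hy.trans (min_le_left _ _)))
    refine ⟨w, hSw, ?_⟩
    rw [mem_closedBall] at hw
    have hwp : dist w p ≤ η := by linarith
    have := hexp w p hwp
    rw [hSw] at this
    rw [le_div_iff₀ hlpos]
    linarith [this]
  -- pull back along an orbit
  have pull : ∀ (m : ℕ) (x y : X), dist y (S^[m] x) ≤ ξ →
      ∃ w, S^[m] w = y ∧ ∀ k, k ≤ m →
        dist (S^[k] w) (S^[k] x) ≤ dist y (S^[m] x) / l ^ (m - k) := by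
    intro m
    induction m with
    | zero =>
        intro x y hy
        exact ⟨y, rfl, fun k hk => by interval_cases k; simpa using le_rfl⟩
    | succ m ih =>
        intro x y hy
        rw [Function.iterate_succ_apply'] at hy
        obtain ⟨w₁, hSw₁, hw₁⟩ := branch (S^[m] x) y hy
        have hw₁ξ : dist w₁ (S^[m] x) ≤ ξ := by
          have h : dist y (S (S^[m] x)) / l ≤ ξ / 1 := by
            apply div_le_div₀ hξpos.le hy (by linarith) hl.le
          simpa using hw₁.trans h
        obtain ⟨w, hSw, hw⟩ := ih x w₁ hw₁ξ
        have hSy : S^[m+1] w = y := by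
          rw [Function.iterate_succ_apply', hSw, hSw₁]
        refine ⟨w, hSy, ?_⟩
        intro k hk
        rcases Nat.lt_or_ge k (m + 1) with hkm | hkm
        · have hkm' : k ≤ m := by omega
          have h1 := hw k hkm'
          have h2 : dist w₁ (S^[m] x) / l ^ (m - k) ≤
              dist y (S^[m+1] x) / l ^ (m + 1 - k) := by
            have hms : m + 1 - k = (m - k) + 1 := by omega
            rw [hms, pow_succ, Function.iterate_succ_apply']
            rw [div_le_div_iff₀ (by positivity) (by positivity)]
            have hpow : (0:ℝ) < l ^ (m - k) := by positivity
            calc dist w₁ (S^[m] x) * (l ^ (m - k) * l)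
                = (dist w₁ (S^[m] x) * l) * l ^ (m - k) := by ring
              _ ≤ dist y (S (S^[m] x)) * l ^ (m - k) := by
                  apply mul_le_mul_of_nonneg_right _ hpow.le
                  rw [← le_div_iff₀ hlpos]
                  exact hw₁
          exact h1.trans h2
        · have hk1 : k = m + 1 := by omega
          subst hk1
          rw [hSy, Nat.sub_self, pow_zero, div_one, Function.iterate_succ_apply']
  -- the closing argument via the Banach fixed point theorem
  have hl1 : (0:ℝ) < l - 1 := by linarith
  refine ⟨ξ * (l - 1) / l, by positivity, ?_⟩
  intro x m hm hxm
  set r : ℝ := ξ / l with hrdef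
  have hrpos : 0 < r := by positivity
  have hball : ∀ w : X, dist w x ≤ r → dist w (S^[m] x) ≤ ξ := by
    intro w hwx
    have h := dist_triangle w x (S^[m] x)
    have : r + ξ * (l - 1) / l = ξ := by rw [hrdef]; field_simp; ring
    linarith
  have hllm : l ≤ l ^ m := le_self_pow₀ hl.le (by omega)
  -- build the contraction on the closed ball
  have key : ∀ w : closedBall x r, ∃ W : closedBall x r,
      S^[m] (W : X) = (w : X) ∧ ∀ k, k ≤ m →
        dist (S^[k] (W : X)) (S^[k] x) ≤ ξ / l ^ (m - k) := by
    rintro ⟨w, hwmem⟩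
    rw [mem_closedBall] at hwmem
    have hwξ : dist w (S^[m] x) ≤ ξ := hball w hwmem
    obtain ⟨W, hSW, hWd⟩ := pull m x w hwξ
    have hWd' : ∀ k, k ≤ m → dist (S^[k] W) (S^[k] x) ≤ ξ / l ^ (m - k) := by
      intro k hk
      refine (hWd k hk).trans ?_
      gcongr
    have hWmem : W ∈ closedBall x r := by
      rw [mem_closedBall]
      have h0 := hWd' 0 (Nat.zero_le m)
      simp only [Function.iterate_zero_apply, Nat.sub_zero] at h0
      refine h0.trans ?_
      rw [hrdef]
      gcongr
    exact ⟨⟨W, hWmem⟩, hSW, hWd'⟩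
  choose F hF1 hF2 using key
  -- F is a contraction with ratio 1/l
  have hFlip : ∀ w w' : closedBall x r,
      dist (F w) (F w') ≤ (1 / l) * dist w w' := by
    intro w w'
    have horb : ∀ k, k < m → dist (S^[k] (F w : X)) (S^[k] (F w' : X)) ≤ η := by
      intro k hk
      have h1 := hF2 w k (by omega)
      have h2 := hF2 w' k (by omega)
      have hge : (1:ℝ) ≤ l ^ (m - k) := by
        calc (1:ℝ) = 1 ^ (m - k) := (one_pow _).symm
          _ ≤ l ^ (m - k) := pow_le_pow_left₀ zero_le_one hl.le _
      have h3 : ξ / l ^ (m - k) ≤ ξ := div_le_self hξpos.le hge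
      calc dist (S^[k] (F w : X)) (S^[k] (F w' : X))
          ≤ dist (S^[k] (F w : X)) (S^[k] x) + dist (S^[k] x) (S^[k] (F w' : X)) :=
            dist_triangle _ _ _
        _ ≤ ξ + ξ := by
            rw [dist_comm (S^[k] x)]
            exact add_le_add (h1.trans h3) (h2.trans h3)
        _ ≤ η := by linarith
    have hexpm := exp_iter hl hexp m (F w : X) (F w' : X) horb
    rw [hF1 w, hF1 w'] at hexpm
    rw [Subtype.dist_eq, Subtype.dist_eq]
    have hd0 : (0:ℝ) ≤ dist (F w : X) (F w' : X) := dist_nonneg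
    rw [one_div, inv_mul_eq_div, le_div_iff₀ hlpos]
    nlinarith [hllm]
  -- apply the Banach fixed point theorem
  haveI : CompleteSpace X := complete_of_compact
  haveI : CompleteSpace (closedBall x r) := isClosed_closedBall.isComplete.completeSpace_coe
  haveI : Nonempty (closedBall x r) := ⟨⟨x, mem_closedBall_self hrpos.le⟩⟩
  set K : ℝ≥0 := ⟨1 / l, by positivity⟩ with hKdef
  have hK : ContractingWith K F := by
    constructor
    · rw [← NNReal.coe_lt_one]
      show (1 / l : ℝ) < 1
      rw [div_lt_one hlpos]
      exact hl
    · apply LipschitzWith.of_dist_le_mul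
      intro w w'
      exact hFlip w w'
  obtain ⟨z, hz, -⟩ := hK.exists_fixedPoint (Classical.arbitrary _) (edist_ne_top _ _)
  have hfix := hF1 z
  rw [show F z = z from hz] at hfix
  exact ⟨(z : X), hfix⟩

theorem stmt0 {X : Type*} [MetricSpace X] [CompactSpace X] (T : X → X)
    (hcont : Continuous T) (hopen : IsOpenMap T) (hexp : DistanceExpanding T) :
    ∃ α : ℝ, 0 < α ∧
      ((∃ (x : X) (L : ℕ), 1 ≤ L ∧ dist x (T^[L] x) ≤ α) →
        ∃ (z : X) (n : ℕ), 1 ≤ n ∧ T^[n] z = z) := by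
  obtain ⟨l, η, N, hl, hη, hexpN⟩ := hexp
  refine ⟨1, one_pos, ?_⟩
  rintro ⟨x0, L, hL, -⟩
  rcases N with _ | N
  · -- N = 0 : the metric is uniformly discrete, X is "finite-like"
    have heq : ∀ x y : X, dist x y ≤ η → x = y := by
      intro x y h
      have h2 := hexpN x y h
      simp only [Function.iterate_zero_apply] at h2
      have hd : dist x y ≤ 0 := by nlinarith [dist_nonneg (x := x) (y := y)]
      exact dist_le_zero.mp hd
    obtain ⟨i, j, hij, hd⟩ := pigeon_orbit T x0 hη
    have hper : T^[i] x0 = T^[j] x0 := heq _ _ hd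
    refine ⟨T^[i] x0, j - i, by omega, ?_⟩
    have h3 : T^[j - i] (T^[i] x0) = T^[j] x0 := by
      rw [← Function.iterate_add_apply]
      congr 1
      omega
    rw [h3, ← hper]
  · -- N ≥ 1 : use the closing lemma for S = T^[N+1]
    set S : X → X := T^[N + 1] with hSdef
    have hcS : Continuous S := hcont.iterate _
    have hoS : IsOpenMap S := by
      rw [hSdef]
      clear_value S
      induction (N + 1) with
      | zero => simpa using IsOpenMap.id
      | succ n ihn =>
          rw [Function.iterate_succ']
          exact hopen.comp ihn
    have hexpS : ∀ x y : X, dist x y ≤ η → l * dist x y ≤ dist (S x) (S y) := hexpN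
    obtain ⟨β, hβ, hcl⟩ := closing hcS hoS hl hη hexpS
    obtain ⟨i, j, hij, hd⟩ := pigeon_orbit S x0 hβ
    have hd' : dist (S^[i] x0) (S^[j - i] (S^[i] x0)) ≤ β := by
      rw [← Function.iterate_add_apply]
      have : j - i + i = j := by omega
      rw [this]
      exact hd
    obtain ⟨z, hz⟩ := hcl (S^[i] x0) (j - i) (by omega) hd'
    refine ⟨z, (N + 1) * (j - i), ?_, ?_⟩
    · have h1 : 1 ≤ j - i := by omega
      calc 1 = 1 * 1 := by ring
        _ ≤ (N + 1) * (j - i) := Nat.mul_le_mul (by omega) h1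
    · rw [Function.iterate_mul]
      exact hz
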